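/- Let λ > 0 and let ψ(x) = Σ_{k∈ℤ², ‖k‖=λ} c_k e^{i k·x} be a trigonometric polynomial on the torus 𝕋² whose frequencies all lie on the circle of radius λ, normalized so that ∫_{𝕋²}|ψ(x)|² dx = (2π)² Σ_k |c_k|² = 1. Then ∫_{𝕋²}|ψ(x)|⁴ dx ≤ 3/(2π)²; equivalently ‖ψ‖_{L⁴(𝕋²)} ≤ 3^{1/4}/√(2π). -/

import Mathlib

open MeasureTheory Filter Topology

/-- Euclidean norm on `Fin n → ℝ`. -/
noncomputable def euclNorm {n : ℕ} (v : Fin n → ℝ) : ℝ := Real.sqrt (∑ i, (v i)^2)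

/-- Euclidean inner product on `Fin n → ℝ`. -/
noncomputable def dotp {n : ℕ} (v w : Fin n → ℝ) : ℝ := ∑ i, v i * w i

/-- The fundamental domain `[0, 2π]ⁿ` of the flat torus `ℝⁿ/(2πℤ)ⁿ`. -/
noncomputable def torusBox (n : ℕ) : Set (Fin n → ℝ) :=
  Set.univ.pi fun _ => Set.Icc 0 (2*Real.pi)

/-- The trigonometric polynomial `x ↦ ∑_{k ∈ F} c_k e^{i k·x}`. -/
noncomputable def eigenSum {n : ℕ} (F : Finset (Fin n → ℤ)) (c : (Fin n → ℤ) → ℂ)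
    (x : Fin n → ℝ) : ℂ :=
  ∑ k ∈ F, c k * Complex.exp (Complex.I * (dotp (fun i => (k i : ℝ)) x : ℝ))

/-- **Zygmund's L⁴ bound on the flat torus `𝕋²`**: if `ψ(x) = ∑_{‖k‖ = λ} c_k e^{i k·x}`
is a Laplace eigenfunction on `𝕋² = ℝ²/(2πℤ)²` with
`∫_{𝕋²} |ψ|² dx = (2π)² ∑_k |c_k|² = 1`, then `∫_{𝕋²} |ψ|⁴ dx ≤ 3/(2π)²`. -/
lemma oneD (n : ℤ) : ∫ t in Set.Icc (0:ℝ) (2*Real.pi), Complex.exp (Complex.I * n * t)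
    = if n = 0 then ((2*Real.pi : ℝ) : ℂ) else 0 := by
  have h2 : (0:ℝ) ≤ 2*Real.pi := by positivity
  rw [MeasureTheory.integral_Icc_eq_integral_Ioc, ← intervalIntegral.integral_of_le h2]
  by_cases hn : n = 0
  · subst hn; simp
  · rw [if_neg hn]
    have hc : Complex.I * n ≠ 0 := by
      simp [Complex.I_ne_zero, hn]
    calc ∫ t in (0:ℝ)..(2*Real.pi), Complex.exp (Complex.I * n * t)
        = ∫ t in (0:ℝ)..(2*Real.pi), Complex.exp ((Complex.I * n) * t) := by
          simp [mul_assoc]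
      _ = (Complex.exp ((Complex.I * n) * (2*Real.pi)) - Complex.exp ((Complex.I * n) * 0)) / (Complex.I * n) := by
          rw [integral_exp_mul_complex hc]; norm_num
      _ = 0 := by
          have : (Complex.I * n) * (2*Real.pi) = (n : ℂ) * (2 * Real.pi * Complex.I) := by
            push_cast; ring
          rw [this, Complex.exp_int_mul_two_pi_mul_I]
          simp

lemma torusBox_eq : torusBox 2 = (MeasurableEquiv.piFinTwo fun _ => ℝ) ⁻¹'
    ((Set.Icc (0:ℝ) (2*Real.pi)) ×ˢ (Set.Icc (0:ℝ) (2*Real.pi))) := by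
  ext x
  simp only [torusBox, Set.mem_pi, Set.mem_univ, forall_true_left, Set.mem_preimage,
    MeasurableEquiv.piFinTwo_apply, Set.mem_prod, Fin.forall_fin_two]

lemma orth (m : Fin 2 → ℤ) :
    ∫ x in torusBox 2, Complex.exp (Complex.I * ((dotp (fun i => (m i : ℝ)) x : ℝ) : ℂ))
      = if m = 0 then (((2*Real.pi)^2 : ℝ) : ℂ) else 0 := by
  have key : ∀ x : Fin 2 → ℝ,
      Complex.exp (Complex.I * ((dotp (fun i => (m i : ℝ)) x : ℝ) : ℂ))
        = (fun p : ℝ × ℝ => Complex.exp (Complex.I * (m 0) * p.1) * Complex.exp (Complex.I * (m 1) * p.2))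
            ((MeasurableEquiv.piFinTwo fun _ => ℝ) x) := by
    intro x
    simp only [MeasurableEquiv.piFinTwo_apply, dotp, Fin.sum_univ_two, ← Complex.exp_add]
    push_cast
    ring_nf
  rw [torusBox_eq]
  rw [show (∫ x in (MeasurableEquiv.piFinTwo fun _ => ℝ) ⁻¹'
      ((Set.Icc (0:ℝ) (2*Real.pi)) ×ˢ (Set.Icc (0:ℝ) (2*Real.pi))),
      Complex.exp (Complex.I * ((dotp (fun i => (m i : ℝ)) x : ℝ) : ℂ))) =
      ∫ x in (MeasurableEquiv.piFinTwo fun _ => ℝ) ⁻¹'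
      ((Set.Icc (0:ℝ) (2*Real.pi)) ×ˢ (Set.Icc (0:ℝ) (2*Real.pi))),
      (fun p : ℝ × ℝ => Complex.exp (Complex.I * (m 0) * p.1) * Complex.exp (Complex.I * (m 1) * p.2))
        ((MeasurableEquiv.piFinTwo fun _ => ℝ) x) from integral_congr_ae (Filter.Eventually.of_forall fun x => key x)]
  have happ := (volume_preserving_piFinTwo fun _ => ℝ).setIntegral_preimage_emb
      (MeasurableEquiv.measurableEmbedding _)
      (fun p : ℝ × ℝ => Complex.exp (Complex.I * (m 0) * p.1) * Complex.exp (Complex.I * (m 1) * p.2))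
      ((Set.Icc (0:ℝ) (2*Real.pi)) ×ˢ (Set.Icc (0:ℝ) (2*Real.pi)))
  have hprod := MeasureTheory.setIntegral_prod_mul (μ := (volume : Measure ℝ)) (ν := (volume : Measure ℝ))
      (fun a : ℝ => Complex.exp (Complex.I * (m 0) * a)) (fun b : ℝ => Complex.exp (Complex.I * (m 1) * b))
      (Set.Icc (0:ℝ) (2*Real.pi)) (Set.Icc (0:ℝ) (2*Real.pi))
  rw [happ, MeasureTheory.Measure.volume_eq_prod ℝ ℝ, hprod]
  rw [oneD, oneD]
  have hm : m = 0 ↔ m 0 = 0 ∧ m 1 = 0 := by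
    constructor
    · intro h; simp [h]
    · intro ⟨h0, h1⟩; funext i; fin_cases i <;> simpa
  by_cases h0 : m 0 = 0 <;> by_cases h1 : m 1 = 0 <;>
    simp [h0, h1, hm] <;> push_cast <;> ring



lemma det0 {a1 a2 b1 b2 d1 d2 : ℝ} (h1 : a1*d1 + a2*d2 = 0) (h2 : b1*d1 + b2*d2 = 0)
    (hd : d1 ≠ 0 ∨ d2 ≠ 0) : a1*b2 - a2*b1 = 0 := by
  rcases hd with hd | hd
  · have h : (a1*b2 - a2*b1)*d1 = 0 := by linear_combination b2*h1 - a2*h2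
    exact (mul_eq_zero.1 h).resolve_right hd
  · have h : (a1*b2 - a2*b1)*d2 = 0 := by linear_combination a1*h2 - b1*h1
    exact (mul_eq_zero.1 h).resolve_right hd

lemma norm_sq_of_eucl {k : Fin 2 → ℤ} {lam : ℝ} (h : euclNorm (fun i => (k i : ℝ)) = lam) :
    ((k 0 : ℝ))^2 + ((k 1 : ℝ))^2 = lam^2 := by
  have h' : Real.sqrt (((k 0 : ℝ))^2 + ((k 1 : ℝ))^2) = lam := by
    simpa [euclNorm, Fin.sum_univ_two] using h
  have hnn : (0:ℝ) ≤ ((k 0 : ℝ))^2 + ((k 1 : ℝ))^2 := by positivity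
  rw [← h', Real.sq_sqrt hnn]

lemma vec_ne {k l : Fin 2 → ℤ} (h : k ≠ l) :
    ((k 0 : ℝ) - (l 0 : ℝ) ≠ 0) ∨ ((k 1 : ℝ) - (l 1 : ℝ) ≠ 0) := by
  by_contra hc
  push_neg at hc
  apply h
  funext i
  fin_cases i
  · exact_mod_cast sub_eq_zero.1 hc.1
  · exact_mod_cast sub_eq_zero.1 hc.2

lemma vec_eq {k l : Fin 2 → ℤ} (h0 : (k 0 : ℝ) - (l 0 : ℝ) = 0) (h1 : (k 1 : ℝ) - (l 1 : ℝ) = 0) :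
    k = l := by
  funext i
  fin_cases i
  · exact_mod_cast sub_eq_zero.1 h0
  · exact_mod_cast sub_eq_zero.1 h1

lemma fiber_card (lam : ℝ) (F : Finset (Fin 2 → ℤ))
    (hF : ∀ k ∈ F, euclNorm (fun i => (k i : ℝ)) = lam) (m : Fin 2 → ℤ) (hm : m ≠ 0) :
    ((F ×ˢ F).filter (fun q => q.1 + q.2 = m)).card ≤ 2 := by
  by_contra hcard
  push_neg at hcard
  obtain ⟨q1, hq1, q2, hq2, q3, hq3, h12, h13, h23⟩ := Finset.two_lt_card.1 hcard
  simp only [Finset.mem_filter, Finset.mem_product] at hq1 hq2 hq3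
  have hsnd : ∀ q : (Fin 2 → ℤ) × (Fin 2 → ℤ), q.1 + q.2 = m → q.2 = m - q.1 :=
    fun q h => by rw [← h]; abel
  -- first components
  set k1 := q1.1 with hk1; set k2 := q2.1 with hk2; set k3 := q3.1 with hk3
  have e1 : q1.2 = m - k1 := hsnd q1 hq1.2
  have e2 : q2.2 = m - k2 := hsnd q2 hq2.2
  have e3 : q3.2 = m - k3 := hsnd q3 hq3.2
  have hne : k1 ≠ k2 ∧ k1 ≠ k3 ∧ k2 ≠ k3 :=
    ⟨fun h => h12 (Prod.ext h (by rw [e1, e2, h])),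
     fun h => h13 (Prod.ext h (by rw [e1, e3, h])),
     fun h => h23 (Prod.ext h (by rw [e2, e3, h]))⟩
  set p := ((m 0 : ℤ) : ℝ) with hp; set q := ((m 1 : ℤ) : ℝ) with hq
  have hmem : ∀ {qq : (Fin 2 → ℤ) × (Fin 2 → ℤ)},
      qq.1 ∈ F ∧ qq.2 ∈ F → qq.1 + qq.2 = m →
      ((qq.1 0 : ℝ))^2 + ((qq.1 1 : ℝ))^2 = lam^2 ∧
      2*(p*(qq.1 0 : ℝ) + q*(qq.1 1 : ℝ)) = p^2 + q^2 := by
    intro qq hmemF hsum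
    have hc1 := norm_sq_of_eucl (hF _ hmemF.1)
    have hc2 := norm_sq_of_eucl (hF _ hmemF.2)
    have h2 : qq.2 = m - qq.1 := hsnd _ hsum
    rw [h2] at hc2
    have e0 : (((m - qq.1) 0 : ℤ) : ℝ) = p - (qq.1 0 : ℝ) := by
      simp [Pi.sub_apply, hp]
    have e1 : (((m - qq.1) 1 : ℤ) : ℝ) = q - (qq.1 1 : ℝ) := by
      simp [Pi.sub_apply, hq]
    rw [e0, e1] at hc2
    exact ⟨hc1, by linear_combination hc1 - hc2⟩
  obtain ⟨circ1, line1⟩ := hmem hq1.1 hq1.2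
  obtain ⟨circ2, line2⟩ := hmem hq2.1 hq2.2
  obtain ⟨circ3, line3⟩ := hmem hq3.1 hq3.2
  set u1 := ((k1 0 : ℤ) : ℝ); set v1 := ((k1 1 : ℤ) : ℝ)
  set u2 := ((k2 0 : ℤ) : ℝ); set v2 := ((k2 1 : ℤ) : ℝ)
  set u3 := ((k3 0 : ℤ) : ℝ); set v3 := ((k3 1 : ℤ) : ℝ)
  have hp2q2 : p^2 + q^2 ≠ 0 := by
    have hor : m 0 ≠ 0 ∨ m 1 ≠ 0 := by
      by_contra hcon; push_neg at hcon
      exact hm (by funext i; fin_cases i <;> simp [hcon.1, hcon.2])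
    rcases hor with h | h
    · have : p ≠ 0 := Int.cast_ne_zero.2 h
      positivity
    · have : q ≠ 0 := Int.cast_ne_zero.2 h
      positivity
  have det12 : p*(v1+v2) - q*(u1+u2) = 0 := by
    refine det0 (d1 := u1 - u2) (d2 := v1 - v2) ?_ ?_ (vec_ne hne.1)
    · linear_combination (line1 - line2)/2
    · linear_combination circ1 - circ2
  have det13 : p*(v1+v3) - q*(u1+u3) = 0 := by
    refine det0 (d1 := u1 - u3) (d2 := v1 - v3) ?_ ?_ (vec_ne hne.2.1)
    · linear_combination (line1 - line3)/2
    · linear_combination circ1 - circ3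
  have line23 : p*(u2-u3) + q*(v2-v3) = 0 := by linear_combination (line2 - line3)/2
  have perp23 : p*(v2-v3) - q*(u2-u3) = 0 := by linear_combination det12 - det13
  have hu : (p^2+q^2)*(u2-u3) = 0 := by linear_combination p*line23 - q*perp23
  have hv : (p^2+q^2)*(v2-v3) = 0 := by linear_combination q*line23 + p*perp23
  exact hne.2.2 (vec_eq ((mul_eq_zero.1 hu).resolve_left hp2q2)
    ((mul_eq_zero.1 hv).resolve_left hp2q2))


lemma sum_fst_le (F : Finset (Fin 2 → ℤ)) (T : Finset ((Fin 2 → ℤ) × (Fin 2 → ℤ)))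
    (g : (Fin 2 → ℤ) × (Fin 2 → ℤ) → Fin 2 → ℤ) (f : (Fin 2 → ℤ) → ℝ) (hf : ∀ k, 0 ≤ f k)
    (hT : ∀ q ∈ T, g q ∈ F)
    (hdet : ∀ q ∈ T, ∀ q' ∈ T, g q = g q' → q = q') :
    ∑ q ∈ T, f (g q) ≤ ∑ k ∈ F, f k := by
  rw [← Finset.sum_image hdet]
  refine Finset.sum_le_sum_of_subset_of_nonneg ?_ (fun k _ _ => hf k)
  intro k hk
  obtain ⟨q, hq, rfl⟩ := Finset.mem_image.1 hk
  exact hT q hq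

lemma combinatorial (lam : ℝ) (F : Finset (Fin 2 → ℤ)) (b : (Fin 2 → ℤ) → ℝ)
    (hb : ∀ k, 0 ≤ b k)
    (hF : ∀ k ∈ F, euclNorm (fun i => (k i : ℝ)) = lam) :
    ∑ p ∈ ((F ×ˢ F) ×ˢ (F ×ˢ F)).filter (fun p => p.1.1 + p.1.2 = p.2.1 + p.2.2),
      b p.1.1 * b p.1.2 * b p.2.1 * b p.2.2 ≤ 3 * (∑ k ∈ F, (b k)^2)^2 := by
  classical
  set P := F ×ˢ F with hP
  set σ : (Fin 2 → ℤ) × (Fin 2 → ℤ) → (Fin 2 → ℤ) := fun q => q.1 + q.2 with hσ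
  set bb : (Fin 2 → ℤ) × (Fin 2 → ℤ) → ℝ := fun q => b q.1 * b q.2 with hbb
  set A : (Fin 2 → ℤ) → ℝ := fun m => ∑ q ∈ P.filter (fun q => σ q = m), bb q with hA
  set M := P.image σ with hM
  set S := ∑ k ∈ F, (b k)^2 with hS
  have hbbnn : ∀ q, 0 ≤ bb q := fun q => mul_nonneg (hb _) (hb _)
  have hAnn : ∀ m, 0 ≤ A m := fun m => Finset.sum_nonneg fun q _ => hbbnn q
  have hSnn : 0 ≤ S := Finset.sum_nonneg fun k _ => sq_nonneg _
  -- Step 1 : LHS = ∑_{m ∈ M} (A m)^2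
  have step1 : ∑ p ∈ ((F ×ˢ F) ×ˢ (F ×ˢ F)).filter (fun p => p.1.1 + p.1.2 = p.2.1 + p.2.2),
      b p.1.1 * b p.1.2 * b p.2.1 * b p.2.2 = ∑ m ∈ M, (A m)^2 := by
    rw [Finset.sum_filter]
    have e1 : ∀ p ∈ P ×ˢ P,
        (if p.1.1 + p.1.2 = p.2.1 + p.2.2 then b p.1.1 * b p.1.2 * b p.2.1 * b p.2.2 else 0)
        = bb p.1 * (if σ p.2 = σ p.1 then bb p.2 else 0) := by
      intro p _
      by_cases h : σ p.1 = σ p.2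
      · rw [if_pos h, if_pos h.symm, hbb]; ring
      · rw [if_neg h, if_neg (fun hh => h hh.symm), mul_zero]
    rw [Finset.sum_congr rfl e1, Finset.sum_product]
    have e2 : ∀ p1 ∈ P, (∑ p2 ∈ P, bb p1 * (if σ p2 = σ p1 then bb p2 else 0))
        = bb p1 * A (σ p1) := by
      intro p1 _
      rw [← Finset.mul_sum, ← Finset.sum_filter]
    rw [Finset.sum_congr rfl e2]
    rw [← Finset.sum_fiberwise_of_maps_to (g := σ) (t := M)
        (fun q hq => Finset.mem_image_of_mem σ hq) (fun q => bb q * A (σ q))]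
    refine Finset.sum_congr rfl fun m hm => ?_
    have e3 : ∀ q ∈ P.filter (fun q => σ q = m), bb q * A (σ q) = bb q * A m := by
      intro q hq
      rw [(Finset.mem_filter.1 hq).2]
    rw [Finset.sum_congr rfl e3, ← Finset.sum_mul]
    show A m * A m = A m ^ 2
    rw [sq]
  rw [step1]
  -- Step 2 : split off m = 0
  have split : ∑ m ∈ M, (A m)^2 ≤ (A 0)^2 + ∑ m ∈ M.erase 0, (A m)^2 := by
    by_cases h0 : (0 : Fin 2 → ℤ) ∈ M
    · rw [← Finset.add_sum_erase M _ h0]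
    · rw [Finset.erase_eq_of_notMem h0]
      nlinarith [sq_nonneg (A 0)]
  -- A 0 ≤ S
  have hA0 : A 0 ≤ S := by
    have hsub : ∀ q ∈ P.filter (fun q => σ q = 0), bb q ≤ (b q.1^2 + b q.2^2)/2 := by
      intro q hq
      have h := sq_nonneg (b q.1 - b q.2)
      rw [hbb]; nlinarith
    have hfibmem : ∀ q ∈ P.filter (fun q => σ q = 0), q.1 ∈ F ∧ q.2 ∈ F ∧ q.2 = -q.1 := by
      intro q hq
      obtain ⟨hqP, hq0⟩ := Finset.mem_filter.1 hq
      obtain ⟨h1, h2⟩ := Finset.mem_product.1 hqP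
      exact ⟨h1, h2, eq_neg_of_add_eq_zero_right hq0⟩
    calc A 0 ≤ ∑ q ∈ P.filter (fun q => σ q = 0), (b q.1^2 + b q.2^2)/2 :=
          Finset.sum_le_sum hsub
      _ = ((∑ q ∈ P.filter (fun q => σ q = 0), b q.1^2)
          + ∑ q ∈ P.filter (fun q => σ q = 0), b q.2^2)/2 := by
          rw [← Finset.sum_add_distrib, ← Finset.sum_div]
      _ ≤ (S + S)/2 := by
          gcongr
          · exact sum_fst_le F _ Prod.fst (fun k => (b k)^2) (fun k => sq_nonneg _)
              (fun q hq => (hfibmem q hq).1)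
              (fun q hq q' hq' h => Prod.ext h (by
                rw [(hfibmem q hq).2.2, (hfibmem q' hq').2.2, h]))
          · exact sum_fst_le F _ Prod.snd (fun k => (b k)^2) (fun k => sq_nonneg _)
              (fun q hq => (hfibmem q hq).2.1)
              (fun q hq q' hq' h => Prod.ext (by
                have e := (hfibmem q hq).2.2
                have e' := (hfibmem q' hq').2.2
                have : -q.1 = -q'.1 := by rw [← e, ← e', h]
                exact neg_injective this) h)
      _ = S := by ring
  -- Step 3 : off-zero part
  have step3 : ∑ m ∈ M.erase 0, (A m)^2 ≤ 2 * S^2 := by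
    have hAm : ∀ m ∈ M.erase 0, (A m)^2 ≤ 2 * ∑ q ∈ P.filter (fun q => σ q = m), (bb q)^2 := by
      intro m hm
      have hm0 : m ≠ 0 := (Finset.mem_erase.1 hm).1
      have h1 : (A m)^2 ≤ ((P.filter (fun q => σ q = m)).card : ℝ)
          * ∑ q ∈ P.filter (fun q => σ q = m), (bb q)^2 := by
        simpa [hA] using sq_sum_le_card_mul_sum_sq
          (s := P.filter (fun q => σ q = m)) (f := bb)
      have h2 : ((P.filter (fun q => σ q = m)).card : ℝ) ≤ 2 := by
        have := fiber_card lam F hF m hm0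
        simp only [hσ, hP]
        exact_mod_cast this
      have h3 : (0:ℝ) ≤ ∑ q ∈ P.filter (fun q => σ q = m), (bb q)^2 :=
        Finset.sum_nonneg fun q _ => sq_nonneg _
      nlinarith
    calc ∑ m ∈ M.erase 0, (A m)^2
        ≤ ∑ m ∈ M.erase 0, 2 * ∑ q ∈ P.filter (fun q => σ q = m), (bb q)^2 :=
          Finset.sum_le_sum hAm
      _ = 2 * ∑ m ∈ M.erase 0, ∑ q ∈ P.filter (fun q => σ q = m), (bb q)^2 := by
          rw [Finset.mul_sum]
      _ ≤ 2 * ∑ m ∈ M, ∑ q ∈ P.filter (fun q => σ q = m), (bb q)^2 := by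
          have hsub := Finset.sum_le_sum_of_subset_of_nonneg
            (f := fun m => ∑ q ∈ P.filter (fun q => σ q = m), (bb q)^2)
            (Finset.erase_subset 0 M)
            (fun m _ _ => Finset.sum_nonneg fun q _ => sq_nonneg (bb q))
          linarith
      _ = 2 * ∑ q ∈ P, (bb q)^2 := by
          rw [Finset.sum_fiberwise_of_maps_to (g := σ) (t := M)
            (fun q hq => Finset.mem_image_of_mem σ hq) (fun q => (bb q)^2)]
      _ = 2 * S^2 := by
          rw [hP, Finset.sum_product, hS, sq]
          rw [Finset.sum_mul_sum]
          congr 1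
          refine Finset.sum_congr rfl fun k _ => Finset.sum_congr rfl fun l _ => ?_
          rw [hbb, mul_pow]
  calc ∑ m ∈ M, (A m)^2 ≤ (A 0)^2 + ∑ m ∈ M.erase 0, (A m)^2 := split
    _ ≤ S^2 + 2*S^2 := by
        have := pow_le_pow_left₀ (hAnn 0) hA0 2
        linarith [step3]
    _ = 3 * S^2 := by ring


section PartA

variable (F : Finset (Fin 2 → ℤ)) (c : (Fin 2 → ℤ) → ℂ)

noncomputable def coeff4 (c : (Fin 2 → ℤ) → ℂ)
    (p : ((Fin 2 → ℤ) × (Fin 2 → ℤ)) × ((Fin 2 → ℤ) × (Fin 2 → ℤ))) : ℂ :=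
  c p.1.1 * c p.1.2 * (starRingEnd ℂ) (c p.2.1) * (starRingEnd ℂ) (c p.2.2)

def mvec (p : ((Fin 2 → ℤ) × (Fin 2 → ℤ)) × ((Fin 2 → ℤ) × (Fin 2 → ℤ))) : Fin 2 → ℤ :=
  p.1.1 + p.1.2 - p.2.1 - p.2.2

lemma expand (x : Fin 2 → ℝ) :
    (eigenSum F c x)^2 * (starRingEnd ℂ) ((eigenSum F c x)^2)
    = ∑ p ∈ (F ×ˢ F) ×ˢ (F ×ˢ F), coeff4 c p *
        Complex.exp (Complex.I * ((dotp (fun i => ((mvec p) i : ℝ)) x : ℝ) : ℂ)) := by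
  classical
  have hconj : ∀ (j : Fin 2 → ℤ),
      (starRingEnd ℂ) (Complex.exp (Complex.I * ((dotp (fun i => (j i : ℝ)) x : ℝ) : ℂ)))
      = Complex.exp (-(Complex.I * ((dotp (fun i => (j i : ℝ)) x : ℝ) : ℂ))) := by
    intro j
    rw [← Complex.exp_conj, map_mul, Complex.conj_I, Complex.conj_ofReal, neg_mul]
  have hadd : ∀ (k l : Fin 2 → ℤ),
      ((dotp (fun i => ((k + l) i : ℝ)) x : ℝ) : ℂ)
      = ((dotp (fun i => (k i : ℝ)) x : ℝ) : ℂ) + ((dotp (fun i => (l i : ℝ)) x : ℝ) : ℂ) := by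
    intro k l
    simp only [dotp, Fin.sum_univ_two, Pi.add_apply]
    push_cast
    ring
  set g : (Fin 2 → ℤ) × (Fin 2 → ℤ) → ℂ := fun q =>
    c q.1 * c q.2 * Complex.exp (Complex.I * ((dotp (fun i => ((q.1 + q.2) i : ℝ)) x : ℝ) : ℂ))
    with hg
  have h2 : (eigenSum F c x)^2 = ∑ q ∈ F ×ˢ F, g q := by
    rw [sq, eigenSum, Finset.sum_mul_sum]
    rw [Finset.sum_product]
    refine Finset.sum_congr rfl fun k _ => Finset.sum_congr rfl fun l _ => ?_
    rw [hg]
    simp only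
    rw [hadd k l, mul_add, Complex.exp_add]
    ring
  rw [h2, map_sum, Finset.sum_mul_sum]
  conv_rhs => rw [Finset.sum_product]
  refine Finset.sum_congr rfl fun q1 _ => Finset.sum_congr rfl fun q2 _ => ?_
  rw [hg]
  simp only
  rw [map_mul, map_mul, hconj]
  have hm : ((dotp (fun i => ((mvec (q1, q2)) i : ℝ)) x : ℝ) : ℂ)
      = ((dotp (fun i => ((q1.1 + q1.2) i : ℝ)) x : ℝ) : ℂ)
        - ((dotp (fun i => ((q2.1 + q2.2) i : ℝ)) x : ℝ) : ℂ) := by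
    simp only [dotp, mvec, Fin.sum_univ_two, Pi.add_apply, Pi.sub_apply]
    push_cast
    ring
  calc c q1.1 * c q1.2 * Complex.exp (Complex.I * ((dotp (fun i => ((q1.1 + q1.2) i : ℝ)) x : ℝ) : ℂ)) *
        ((starRingEnd ℂ) (c q2.1) * (starRingEnd ℂ) (c q2.2) *
          Complex.exp (-(Complex.I * ((dotp (fun i => ((q2.1 + q2.2) i : ℝ)) x : ℝ) : ℂ))))
      = coeff4 c (q1, q2) *
        (Complex.exp (Complex.I * ((dotp (fun i => ((q1.1 + q1.2) i : ℝ)) x : ℝ) : ℂ)) *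
          Complex.exp (-(Complex.I * ((dotp (fun i => ((q2.1 + q2.2) i : ℝ)) x : ℝ) : ℂ)))) := by
        unfold coeff4; ring
    _ = _ := by
        rw [← Complex.exp_add, hm]
        ring_nf

lemma cont_exp (m : Fin 2 → ℤ) :
    Continuous (fun x : Fin 2 → ℝ =>
      Complex.exp (Complex.I * ((dotp (fun i => (m i : ℝ)) x : ℝ) : ℂ))) := by
  apply Complex.continuous_exp.comp
  apply Continuous.mul continuous_const
  apply Complex.continuous_ofReal.comp
  unfold dotp
  exact continuous_finset_sum _ fun i _ => continuous_const.mul (continuous_apply i)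

lemma torus_compact : IsCompact (torusBox 2) :=
  isCompact_univ_pi fun _ => isCompact_Icc

lemma torus_meas : MeasurableSet (torusBox 2) :=
  MeasurableSet.univ_pi fun _ => measurableSet_Icc

lemma integrable_term (p : ((Fin 2 → ℤ) × (Fin 2 → ℤ)) × ((Fin 2 → ℤ) × (Fin 2 → ℤ))) :
    IntegrableOn (fun x : Fin 2 → ℝ => coeff4 c p *
      Complex.exp (Complex.I * ((dotp (fun i => ((mvec p) i : ℝ)) x : ℝ) : ℂ)))
      (torusBox 2) :=
  ((continuous_const.mul (cont_exp (mvec p))).continuousOn).integrableOn_compact'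
    torus_compact torus_meas

lemma hGint :
    ∫ x in torusBox 2, (∑ p ∈ (F ×ˢ F) ×ˢ (F ×ˢ F), coeff4 c p *
        Complex.exp (Complex.I * ((dotp (fun i => ((mvec p) i : ℝ)) x : ℝ) : ℂ)))
    = ∑ p ∈ (F ×ˢ F) ×ˢ (F ×ˢ F), coeff4 c p *
        (if mvec p = 0 then (((2*Real.pi)^2 : ℝ) : ℂ) else 0) := by
  rw [integral_finset_sum _ (fun p _ => integrable_term c p)]
  refine Finset.sum_congr rfl fun p _ => ?_
  rw [MeasureTheory.integral_const_mul, orth (mvec p)]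

end PartA

theorem statement0 (lam : ℝ) (hlam : 0 < lam) (F : Finset (Fin 2 → ℤ))
    (c : (Fin 2 → ℤ) → ℂ) (ψ : (Fin 2 → ℝ) → ℂ)
    (hF : ∀ k ∈ F, euclNorm (fun i => (k i : ℝ)) = lam)
    (hψ : ∀ x, ψ x = eigenSum F c x)
    (hnorm : ∫ x in torusBox 2, ‖ψ x‖ ^ 2 = 1)
    (hnormc : (2 * Real.pi)^2 * ∑ k ∈ F, ‖c k‖ ^ 2 = 1) :
    ∫ x in torusBox 2, ‖ψ x‖ ^ 4 ≤ 3 / (2 * Real.pi)^2 := by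
  classical
  set S := ∑ k ∈ F, ‖c k‖ ^ 2 with hSdef
  have hpi : (0:ℝ) < (2 * Real.pi)^2 := by positivity
  set Q4 := (F ×ˢ F) ×ˢ (F ×ˢ F) with hQ4
  set G : (Fin 2 → ℝ) → ℂ := fun x => ∑ p ∈ Q4, coeff4 c p *
      Complex.exp (Complex.I * ((dotp (fun i => ((mvec p) i : ℝ)) x : ℝ) : ℂ)) with hG
  have habs4 : ∀ z : ℂ, ‖z‖^4 = (z^2 * (starRingEnd ℂ) (z^2)).re := by
    intro z
    rw [Complex.mul_conj]
    rw [show Complex.normSq (z^2) = ‖z‖^4 by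
      rw [Complex.normSq_eq_norm_sq, norm_pow]; ring]
    rw [Complex.ofReal_re]
  have hpt : ∀ x, ‖ψ x‖ ^ 4 = (G x).re := by
    intro x
    rw [hψ x, habs4, expand F c x]
  have hGi : IntegrableOn G (torusBox 2) :=
    MeasureTheory.integrable_finset_sum _ (fun p _ => integrable_term c p)
  have h1 : ∫ x in torusBox 2, ‖ψ x‖ ^ 4 = (∫ x in torusBox 2, G x).re := by
    rw [show (∫ x in torusBox 2, ‖ψ x‖ ^ 4)
        = ∫ x in torusBox 2, (G x).re from
      integral_congr_ae (Filter.Eventually.of_forall fun x => hpt x)]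
    simpa [RCLike.re_to_complex] using integral_re (𝕜 := ℂ) hGi
  rw [h1, hGint F c]
  -- rewrite the sum as a filtered sum
  have h2 : (∑ p ∈ Q4, coeff4 c p * (if mvec p = 0 then (((2*Real.pi)^2 : ℝ) : ℂ) else 0))
      = ∑ p ∈ Q4.filter (fun p => p.1.1 + p.1.2 = p.2.1 + p.2.2),
          coeff4 c p * (((2*Real.pi)^2 : ℝ) : ℂ) := by
    simp only [mul_ite, mul_zero]
    rw [← Finset.sum_filter]
    congr 1
    apply Finset.filter_congr
    intro p _
    constructor
    · intro h
      have h' : p.1.1 + p.1.2 - p.2.1 - p.2.2 = 0 := h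
      rw [sub_sub] at h'
      exact sub_eq_zero.1 h'
    · intro h
      show p.1.1 + p.1.2 - p.2.1 - p.2.2 = 0
      rw [sub_sub, h, sub_self]
  rw [h2]
  have h3 : (∑ p ∈ Q4.filter (fun p => p.1.1 + p.1.2 = p.2.1 + p.2.2),
      coeff4 c p * (((2*Real.pi)^2 : ℝ) : ℂ)).re
      ≤ (2*Real.pi)^2 * ∑ p ∈ Q4.filter (fun p => p.1.1 + p.1.2 = p.2.1 + p.2.2),
          ‖c p.1.1‖ * ‖c p.1.2‖ * ‖c p.2.1‖
            * ‖c p.2.2‖ := by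
    refine le_trans (Complex.re_le_norm _) ?_
    refine le_trans (norm_sum_le _ _) ?_
    rw [Finset.mul_sum]
    refine Finset.sum_le_sum fun p _ => le_of_eq ?_
    rw [norm_mul, Complex.norm_of_nonneg hpi.le]
    unfold coeff4
    rw [norm_mul, norm_mul, norm_mul, Complex.norm_conj, Complex.norm_conj]
    ring
  have h4 := combinatorial lam F (fun k => ‖c k‖)
    (fun k => norm_nonneg _) hF
  have hSval : S = 1/(2*Real.pi)^2 := by
    field_simp
    linarith [hnormc]
  calc (∑ p ∈ Q4.filter (fun p => p.1.1 + p.1.2 = p.2.1 + p.2.2),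
      coeff4 c p * (((2*Real.pi)^2 : ℝ) : ℂ)).re
      ≤ (2*Real.pi)^2 * ∑ p ∈ Q4.filter (fun p => p.1.1 + p.1.2 = p.2.1 + p.2.2),
          ‖c p.1.1‖ * ‖c p.1.2‖ * ‖c p.2.1‖
            * ‖c p.2.2‖ := h3
    _ ≤ (2*Real.pi)^2 * (3 * S^2) := by
        have := h4
        nlinarith [h4, hpi]
    _ = 3 / (2*Real.pi)^2 := by
        rw [hSval]
        field_simp
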